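/- arXiv:1902.00713 — 2 statements merged into one kernel-verified Lean document; each statement's English description precedes it below -/
import Mathlib

section
/- Let m, n₁,…,n_l be positive integers, n := m + n₁ + ⋯ + n_l, and let S be the polynomial ring over 𝔽₂ = ℤ/2 in the indeterminates α₁,…,α_m and β_i^{(p)} for 1 ≤ p ≤ l, 1 ≤ i ≤ ⌊n_p/2⌋. With the conventions α₀ := 1, α_i := α_{2m−i} for m < i ≤ 2m, α_i := 0 for i < 0 or i > 2m, β_0^{(p)} := 1, β_i^{(p)} := β_{n_p−i}^{(p)} for ⌊n_p/2⌋ < i ≤ n_p, β_i^{(p)} := 0 for i < 0 or i > n_p, define μ_j := Σ_{a₁+⋯+a_l = j} β_{a₁}^{(1)}⋯β_{a_l}^{(l)} and ν_k := Σ_{i=0}^{⌊k/2⌋} α_{k−2i}·μ_i + (binom(2n, k) mod 2), elements of S. Let B ⊆ S be the subring generated by all the β_i^{(p)}. Then: (a) for every odd k ≥ 1, ν_k is a B-linear combination of the elements α_i with i odd, 1 ≤ i ≤ m; (b) the ideal of S generated by {ν_i : 1 ≤ i ≤ m, i odd} equals the ideal generated by {α_i : 1 ≤ i ≤ m, i odd};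 (c) the elements of {ν_i : 1 ≤ i ≤ m, i odd} form an S-regular sequence in any order. -/
open MvPolynomial

/-- A sequence (given as a list) `a₁, …, aₙ` in a commutative ring `A` is `A`-regular if for
each `i`, `aᵢ` is not a zero divisor on `A ⧸ (a₁, …, a_{i-1})`. -/
def IsRegularSeq {A : Type*} [CommRing A] (l : List A) : Prop :=
  ∀ (i : ℕ) (h : i < l.length), ∀ x : A,
    l.get ⟨i, h⟩ * x ∈ Ideal.span {y | y ∈ l.take i} →
      x ∈ Ideal.span {y | y ∈ l.take i}

/-- The element `α_i` of the polynomial ring `S` over `𝔽₂` in the indeterminates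
`α₁, …, α_m` and `β_i^{(p)}`, with the conventions `α_0 = 1`, `α_i = α_{2m−i}` for
`m < i ≤ 2m`, and `α_i = 0` for `i > 2m`. -/
noncomputable def alS (m l : ℕ) (n : Fin l → ℕ) (i : ℕ) :
    MvPolynomial (Fin m ⊕ Σ p : Fin l, Fin (n p / 2)) (ZMod 2) :=
  if h : i ≤ 2 * m then
    (if h1 : 1 ≤ min i (2 * m - i) then X (Sum.inl ⟨min i (2 * m - i) - 1, by omega⟩) else 1)
  else 0

/-- The element `β_i^{(p)}` of `S`, with the conventions `β_0^{(p)} = 1`,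
`β_i^{(p)} = β_{n_p−i}^{(p)}` for `⌊n_p/2⌋ < i ≤ n_p`, and `β_i^{(p)} = 0` for `i > n_p`. -/
noncomputable def beS (m l : ℕ) (n : Fin l → ℕ) (p : Fin l) (i : ℕ) :
    MvPolynomial (Fin m ⊕ Σ p : Fin l, Fin (n p / 2)) (ZMod 2) :=
  if h : i ≤ n p then
    (if h1 : 1 ≤ min i (n p - i) then X (Sum.inr ⟨p, ⟨min i (n p - i) - 1, by omega⟩⟩) else 1)
  else 0

/-- `μ_j := Σ_{a₁+⋯+a_l = j} β_{a₁}^{(1)} ⋯ β_{a_l}^{(l)}`. -/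
noncomputable def muS (m l : ℕ) (n : Fin l → ℕ) (j : ℕ) :
    MvPolynomial (Fin m ⊕ Σ p : Fin l, Fin (n p / 2)) (ZMod 2) :=
  ∑ a ∈ (Fintype.piFinset fun _ : Fin l => Finset.range (j + 1)).filter
      (fun a => ∑ p, a p = j),
    ∏ p, beS m l n p (a p)

/-- `ν_k := Σ_{i=0}^{⌊k/2⌋} α_{k−2i}·μ_i + (binom(2n, k) mod 2)`, with
`n = m + n₁ + ⋯ + n_l`. -/
noncomputable def nuS (m l : ℕ) (n : Fin l → ℕ) (k : ℕ) :
    MvPolynomial (Fin m ⊕ Σ p : Fin l, Fin (n p / 2)) (ZMod 2) :=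
  (∑ i ∈ Finset.range (k / 2 + 1), alS m l n (k - 2 * i) * muS m l n i) +
    (Nat.choose (2 * (m + ∑ p, n p)) k :
      MvPolynomial (Fin m ⊕ Σ p : Fin l, Fin (n p / 2)) (ZMod 2))

/-- The subring `B ⊆ S` generated by all the indeterminates `β_i^{(p)}`. -/
noncomputable def Bsub (m l : ℕ) (n : Fin l → ℕ) :
    Subring (MvPolynomial (Fin m ⊕ Σ p : Fin l, Fin (n p / 2)) (ZMod 2)) :=
  Subring.closure (Set.range fun v : Σ p : Fin l, Fin (n p / 2) => X (Sum.inr v))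


namespace St14

variable (m l : ℕ) (n : Fin l → ℕ)

lemma alS_eq_X {t : ℕ} (h1 : 1 ≤ t) (h2 : t ≤ m) :
    alS m l n t = X (Sum.inl ⟨t - 1, by omega⟩) := by
  have hmin : min t (2 * m - t) = t := by omega
  rw [alS, dif_pos (by omega : t ≤ 2 * m), dif_pos (by omega : 1 ≤ min t (2 * m - t))]
  simp only [hmin]

lemma alS_gt {t : ℕ} (h : 2 * m < t) : alS m l n t = 0 := by
  rw [alS, dif_neg (by omega)]

lemma alS_odd_reduce {j : ℕ} (hj : Odd j) (h2 : j ≤ 2 * m) :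
    Odd (min j (2 * m - j)) ∧ 1 ≤ min j (2 * m - j) ∧ min j (2 * m - j) ≤ m ∧
      alS m l n j = alS m l n (min j (2 * m - j)) := by
  obtain ⟨r, hr⟩ := hj
  have hodd : Odd (min j (2 * m - j)) := by
    rcases Nat.le_total j (2 * m - j) with h | h
    · rw [min_eq_left h]; exact ⟨r, hr⟩
    · rw [min_eq_right h]; exact ⟨m - r - 1, by omega⟩
  have h1 : 1 ≤ min j (2 * m - j) := hodd.pos
  have hle : min j (2 * m - j) ≤ m := by omega
  refine ⟨hodd, h1, hle, ?_⟩
  rw [alS_eq_X m l n h1 hle, alS, dif_pos h2, dif_pos h1]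

lemma beS_mem (p : Fin l) (i : ℕ) : beS m l n p i ∈ Bsub m l n := by
  rw [beS]
  split
  · split
    · exact Subring.subset_closure ⟨_, rfl⟩
    · exact Subring.one_mem _
  · exact Subring.zero_mem _

lemma muS_mem (j : ℕ) : muS m l n j ∈ Bsub m l n := by
  rw [muS]
  exact Subring.sum_mem _ fun a _ => Subring.prod_mem _ fun p _ => beS_mem m l n p _

lemma beS_zero (p : Fin l) : beS m l n p 0 = 1 := by
  rw [beS, dif_pos (Nat.zero_le _), dif_neg (by omega)]

lemma muS_zero : muS m l n 0 = 1 := by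
  rw [muS]
  rw [Finset.sum_eq_single (fun _ : Fin l => 0)]
  · simp [beS_zero]
  · intro a ha hne
    exfalso
    apply hne
    funext p
    simp only [Finset.mem_filter] at ha
    have := ha.2
    have hp : a p ≤ ∑ q, a q := Finset.single_le_sum (f := a) (fun _ _ => Nat.zero_le _) (Finset.mem_univ p)
    omega
  · intro h
    exfalso
    apply h
    simp [Fintype.mem_piFinset]

lemma two_dvd_choose {N k : ℕ} (hk : Odd k) : 2 ∣ (2 * N).choose k := by
  rcases Nat.eq_zero_or_pos N with h | h
  · subst h
    rw [show 2 * 0 = 0 from rfl, Nat.choose_eq_zero_of_lt hk.pos]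
    exact dvd_zero 2
  · obtain ⟨k', rfl⟩ : ∃ k', k = k' + 1 := ⟨k - 1, (Nat.succ_pred_eq_of_pos hk.pos).symm⟩
    have hid := Nat.add_one_mul_choose_eq (2 * N - 1) k'
    rw [show 2 * N - 1 + 1 = 2 * N by omega] at hid
    have h2 : 2 ∣ (2 * N).choose (k' + 1) * (k' + 1) := by
      rw [← hid]
      exact Dvd.dvd.mul_right ⟨N, rfl⟩ _
    refine Nat.Coprime.dvd_of_dvd_mul_right ?_ h2
    refine (Nat.Prime.coprime_iff_not_dvd Nat.prime_two).mpr ?_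
    rcases hk with ⟨r, hr⟩
    omega

lemma nu_odd {k : ℕ} (hk : Odd k) :
    nuS m l n k = ∑ i ∈ Finset.range (k / 2 + 1), alS m l n (k - 2 * i) * muS m l n i := by
  rw [nuS]
  obtain ⟨c, hc⟩ := two_dvd_choose (N := m + ∑ p, n p) hk
  rw [hc]
  push_cast
  rw [show ((2 : MvPolynomial (Fin m ⊕ Σ p : Fin l, Fin (n p / 2)) (ZMod 2))) = 0 by
    have := CharP.cast_eq_zero (MvPolynomial (Fin m ⊕ Σ p : Fin l, Fin (n p / 2)) (ZMod 2)) 2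
    exact_mod_cast this]
  ring

lemma nu_expand {k : ℕ} (hk : Odd k) :
    nuS m l n k = alS m l n k +
      ∑ i ∈ Finset.range (k / 2), alS m l n (k - 2 * (i + 1)) * muS m l n (i + 1) := by
  rw [nu_odd m l n hk, Finset.sum_range_succ']
  simp [muS_zero, add_comm]

lemma parta (hm : 1 ≤ m) {k : ℕ} (hk : Odd k) :
    ∃ c : ℕ → MvPolynomial (Fin m ⊕ Σ p : Fin l, Fin (n p / 2)) (ZMod 2),
      (∀ i, c i ∈ Bsub m l n) ∧
      nuS m l n k = ∑ i ∈ (Finset.Icc 1 m).filter (fun i => Odd i),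
        c i * alS m l n i := by
  classical
  set T := (Finset.Icc 1 m).filter (fun i => Odd i) with hT
  refine ⟨fun t => ∑ i ∈ Finset.range (k / 2 + 1),
      if k - 2 * i ≤ 2 * m ∧ min (k - 2 * i) (2 * m - (k - 2 * i)) = t
      then muS m l n i else 0, fun t => ?_, ?_⟩
  · refine Subring.sum_mem _ fun i _ => ?_
    split
    · exact muS_mem m l n i
    · exact Subring.zero_mem _
  · have step : ∀ t, (∑ i ∈ Finset.range (k / 2 + 1),
        if k - 2 * i ≤ 2 * m ∧ min (k - 2 * i) (2 * m - (k - 2 * i)) = t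
        then muS m l n i else 0) * alS m l n t
        = ∑ i ∈ Finset.range (k / 2 + 1),
          (if k - 2 * i ≤ 2 * m ∧ min (k - 2 * i) (2 * m - (k - 2 * i)) = t
           then muS m l n i * alS m l n t else 0) := by
      intro t
      rw [Finset.sum_mul]
      exact Finset.sum_congr rfl fun i _ => by split <;> simp
    have inner : ∀ i ∈ Finset.range (k / 2 + 1),
        alS m l n (k - 2 * i) * muS m l n i
        = ∑ t ∈ T, (if k - 2 * i ≤ 2 * m ∧
            min (k - 2 * i) (2 * m - (k - 2 * i)) = t
          then muS m l n i * alS m l n t else 0) := by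
      intro i hi
      simp only [Finset.mem_range] at hi
      obtain ⟨r, hr⟩ := hk
      have h2i : 2 * i ≤ k := by omega
      have hodd : Odd (k - 2 * i) := ⟨r - i, by omega⟩
      by_cases hle : k - 2 * i ≤ 2 * m
      · obtain ⟨ht_odd, ht1, htm, heq⟩ := alS_odd_reduce m l n hodd hle
        rw [heq, mul_comm]
        have hmem : min (k - 2 * i) (2 * m - (k - 2 * i)) ∈ T := by
          rw [hT, Finset.mem_filter, Finset.mem_Icc]
          exact ⟨⟨ht1, htm⟩, ht_odd⟩
        simp only [hle, true_and]
        rw [Finset.sum_ite_eq T _ (fun t => muS m l n i * alS m l n t), if_pos hmem]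
      · rw [alS_gt m l n (by omega), zero_mul]
        symm
        apply Finset.sum_eq_zero
        intro t _
        rw [if_neg (by tauto)]
    rw [nu_odd m l n hk, Finset.sum_congr rfl inner, Finset.sum_comm]
    exact Finset.sum_congr rfl fun t _ => (step t).symm

lemma partb (hm : 1 ≤ m) :
    Ideal.span {x | ∃ i, Odd i ∧ 1 ≤ i ∧ i ≤ m ∧ x = nuS m l n i} =
      Ideal.span {x | ∃ i, Odd i ∧ 1 ≤ i ∧ i ≤ m ∧ x = alS m l n i} := by
  apply le_antisymm
  · rw [Ideal.span_le]
    rintro x ⟨i, hodd, h1, h2, rfl⟩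
    obtain ⟨c, hc, heq⟩ := parta m l n hm hodd
    rw [heq]
    refine Ideal.sum_mem _ fun t ht => Ideal.mul_mem_left _ _ (Ideal.subset_span ?_)
    simp only [Finset.mem_filter, Finset.mem_Icc] at ht
    exact ⟨t, ht.2, ht.1.1, ht.1.2, rfl⟩
  · rw [Ideal.span_le]
    rintro x ⟨i, hodd, h1, h2, rfl⟩
    induction i using Nat.strong_induction_on with
    | _ k ih =>
      have hexp := nu_expand m l n hodd
      have hre : alS m l n k = nuS m l n k -
          ∑ i ∈ Finset.range (k / 2), alS m l n (k - 2 * (i + 1)) * muS m l n (i + 1) := by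
        rw [hexp]; ring
      rw [hre]
      refine sub_mem (Ideal.subset_span ⟨k, hodd, h1, h2, rfl⟩)
        (Ideal.sum_mem _ fun i hi => ?_)
      simp only [Finset.mem_range] at hi
      obtain ⟨r, hr⟩ := hodd
      rw [mul_comm]
      exact Ideal.mul_mem_left _ _
        (ih (k - 2 * (i + 1)) (by omega) ⟨r - (i + 1), by omega⟩ (by omega) (by omega))

noncomputable def gF (m l : ℕ) (n : Fin l → ℕ) :
    ℕ → MvPolynomial (Fin m ⊕ Σ p : Fin l, Fin (n p / 2)) (ZMod 2)
  | j => alS m l n (j + 1) + ∑ i ∈ (Finset.range ((j + 1) / 2)).attach,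
      gF m l n (j - 2 * (i.1 + 1)) * muS m l n (i.1 + 1)
  decreasing_by
    have := i.2
    simp only [Finset.mem_range] at this
    omega

noncomputable def phiF (m l : ℕ) (n : Fin l → ℕ) :
    MvPolynomial (Fin m ⊕ Σ p : Fin l, Fin (n p / 2)) (ZMod 2) →ₐ[ZMod 2]
    MvPolynomial (Fin m ⊕ Σ p : Fin l, Fin (n p / 2)) (ZMod 2) :=
  aeval fun v => match v with
    | Sum.inl j => if (j : ℕ) % 2 = 0 then nuS m l n ((j : ℕ) + 1) else X (Sum.inl j)
    | Sum.inr w => X (Sum.inr w)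

noncomputable def psiF (m l : ℕ) (n : Fin l → ℕ) :
    MvPolynomial (Fin m ⊕ Σ p : Fin l, Fin (n p / 2)) (ZMod 2) →ₐ[ZMod 2]
    MvPolynomial (Fin m ⊕ Σ p : Fin l, Fin (n p / 2)) (ZMod 2) :=
  aeval fun v => match v with
    | Sum.inl j => if (j : ℕ) % 2 = 0 then gF m l n (j : ℕ) else X (Sum.inl j)
    | Sum.inr w => X (Sum.inr w)

lemma phiF_X_inl (j : Fin m) :
    phiF m l n (X (Sum.inl j)) =
      if (j : ℕ) % 2 = 0 then nuS m l n ((j : ℕ) + 1) else X (Sum.inl j) := by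
  rw [phiF, aeval_X]

lemma phiF_X_inr (w : Σ p : Fin l, Fin (n p / 2)) :
    phiF m l n (X (Sum.inr w)) = X (Sum.inr w) := by
  rw [phiF, aeval_X]

lemma psiF_X_inl (j : Fin m) :
    psiF m l n (X (Sum.inl j)) =
      if (j : ℕ) % 2 = 0 then gF m l n (j : ℕ) else X (Sum.inl j) := by
  rw [psiF, aeval_X]

lemma psiF_X_inr (w : Σ p : Fin l, Fin (n p / 2)) :
    psiF m l n (X (Sum.inr w)) = X (Sum.inr w) := by
  rw [psiF, aeval_X]

lemma phiF_beS (p : Fin l) (i : ℕ) : phiF m l n (beS m l n p i) = beS m l n p i := by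
  rw [beS]
  split
  · split
    · exact phiF_X_inr m l n _
    · exact map_one _
  · exact map_zero _

lemma psiF_beS (p : Fin l) (i : ℕ) : psiF m l n (beS m l n p i) = beS m l n p i := by
  rw [beS]
  split
  · split
    · exact psiF_X_inr m l n _
    · exact map_one _
  · exact map_zero _

lemma phiF_muS (j : ℕ) : phiF m l n (muS m l n j) = muS m l n j := by
  rw [muS, map_sum]
  exact Finset.sum_congr rfl fun a _ => by
    rw [map_prod]
    exact Finset.prod_congr rfl fun p _ => phiF_beS m l n p _

lemma psiF_muS (j : ℕ) : psiF m l n (muS m l n j) = muS m l n j := by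
  rw [muS, map_sum]
  exact Finset.sum_congr rfl fun a _ => by
    rw [map_prod]
    exact Finset.prod_congr rfl fun p _ => psiF_beS m l n p _

lemma phiF_alS {t : ℕ} (hodd : Odd t) (h1 : 1 ≤ t) (h2 : t ≤ m) :
    phiF m l n (alS m l n t) = nuS m l n t := by
  rw [alS_eq_X m l n h1 h2, phiF_X_inl]
  obtain ⟨r, hr⟩ := hodd
  rw [if_pos (by simp only []; omega)]
  congr 1
  simp only []
  omega

lemma psiF_alS {t : ℕ} (hodd : Odd t) (h1 : 1 ≤ t) (h2 : t ≤ m) :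
    psiF m l n (alS m l n t) = gF m l n (t - 1) := by
  rw [alS_eq_X m l n h1 h2, psiF_X_inl]
  obtain ⟨r, hr⟩ := hodd
  rw [if_pos (by simp only []; omega)]

lemma phiF_gF : ∀ j, j % 2 = 0 → j < m →
    phiF m l n (gF m l n j) = alS m l n (j + 1) := by
  intro j
  induction j using Nat.strong_induction_on with
  | _ j ih =>
    intro hj2 hjm
    have hoddj : Odd (j + 1) := ⟨j / 2, by omega⟩
    rw [gF, map_add, map_sum]
    have hterm : ∀ i : {x // x ∈ Finset.range ((j + 1) / 2)},
        phiF m l n (gF m l n (j - 2 * (i.1 + 1)) * muS m l n (i.1 + 1))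
        = alS m l n (j - 2 * (i.1 + 1) + 1) * muS m l n (i.1 + 1) := by
      intro i
      have hi := i.2
      simp only [Finset.mem_range] at hi
      rw [map_mul, phiF_muS, ih _ (by omega) (by omega) (by omega)]
    rw [Finset.sum_congr rfl fun i _ => hterm i,
      Finset.sum_attach (Finset.range ((j + 1) / 2))
        (fun i => alS m l n (j - 2 * (i + 1) + 1) * muS m l n (i + 1)),
      phiF_alS m l n hoddj (by omega) (by omega),
      nu_expand m l n hoddj]
    have hsum : ∑ i ∈ Finset.range ((j + 1) / 2),
        alS m l n (j + 1 - 2 * (i + 1)) * muS m l n (i + 1)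
        = ∑ i ∈ Finset.range ((j + 1) / 2),
          alS m l n (j - 2 * (i + 1) + 1) * muS m l n (i + 1) := by
      refine Finset.sum_congr rfl fun i hi => ?_
      simp only [Finset.mem_range] at hi
      have : j + 1 - 2 * (i + 1) = j - 2 * (i + 1) + 1 := by omega
      rw [this]
    rw [hsum, add_assoc, CharTwo.add_self_eq_zero, add_zero]

lemma psiF_nuS {j : ℕ} (hj2 : j % 2 = 0) (hjm : j < m) :
    psiF m l n (nuS m l n (j + 1)) = alS m l n (j + 1) := by
  have hoddj : Odd (j + 1) := ⟨j / 2, by omega⟩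
  rw [nu_expand m l n hoddj, map_add, map_sum]
  have hterm : ∀ i ∈ Finset.range ((j + 1) / 2),
      psiF m l n (alS m l n (j + 1 - 2 * (i + 1)) * muS m l n (i + 1))
      = gF m l n (j - 2 * (i + 1)) * muS m l n (i + 1) := by
    intro i hi
    simp only [Finset.mem_range] at hi
    have hodd' : Odd (j + 1 - 2 * (i + 1)) := ⟨j / 2 - (i + 1), by omega⟩
    rw [map_mul, psiF_muS, psiF_alS m l n hodd' (by omega) (by omega)]
    congr 2
    omega
  rw [Finset.sum_congr rfl hterm,
    psiF_alS m l n hoddj (by omega) (by omega)]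
  have h0 : j + 1 - 1 = j := by omega
  rw [h0, gF]
  rw [Finset.sum_attach (Finset.range ((j + 1) / 2))
    (fun i => gF m l n (j - 2 * (i + 1)) * muS m l n (i + 1))]
  rw [add_assoc, CharTwo.add_self_eq_zero, add_zero]

noncomputable def eqv (m l : ℕ) (n : Fin l → ℕ) :
    MvPolynomial (Fin m ⊕ Σ p : Fin l, Fin (n p / 2)) (ZMod 2) ≃ₐ[ZMod 2]
    MvPolynomial (Fin m ⊕ Σ p : Fin l, Fin (n p / 2)) (ZMod 2) :=
  AlgEquiv.ofAlgHom (phiF m l n) (psiF m l n)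
    (by
      apply MvPolynomial.algHom_ext
      rintro (j | w)
      · rw [AlgHom.comp_apply, AlgHom.id_apply, psiF_X_inl]
        by_cases hj : (j : ℕ) % 2 = 0
        · rw [if_pos hj, phiF_gF m l n _ hj j.2,
            alS_eq_X m l n (by omega) (by omega : (j : ℕ) + 1 ≤ m)]
          exact congrArg X (congrArg Sum.inl (Fin.ext (by simp)))
        · rw [if_neg hj, phiF_X_inl, if_neg hj]
      · rw [AlgHom.comp_apply, AlgHom.id_apply, psiF_X_inr, phiF_X_inr])
    (by
      apply MvPolynomial.algHom_ext
      rintro (j | w)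
      · rw [AlgHom.comp_apply, AlgHom.id_apply, phiF_X_inl]
        by_cases hj : (j : ℕ) % 2 = 0
        · rw [if_pos hj, psiF_nuS m l n hj j.2,
            alS_eq_X m l n (by omega) (by omega : (j : ℕ) + 1 ≤ m)]
          exact congrArg X (congrArg Sum.inl (Fin.ext (by simp)))
        · rw [if_neg hj, psiF_X_inl, if_neg hj]
      · rw [AlgHom.comp_apply, AlgHom.id_apply, phiF_X_inr, psiF_X_inr])

lemma eqv_apply (x) : eqv m l n x = phiF m l n x := rfl

lemma eqv_symm_apply (x) : (eqv m l n).symm x = psiF m l n x := rfl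

lemma isRegular_map {A : Type*} [CommRing A] (e : A ≃+* A) {L : List A}
    (h : IsRegularSeq L) : IsRegularSeq (L.map e) := by
  intro i hi x hx
  have hi' : i < L.length := by simpa using hi
  have hget : (L.map e).get ⟨i, hi⟩ = e (L.get ⟨i, hi'⟩) := by simp
  have htake : {y | y ∈ (L.map ⇑e).take i} = ⇑e '' {y | y ∈ L.take i} := by
    ext y
    simp [← List.map_take, List.mem_map]
  have hspan : Ideal.span (⇑e '' {y | y ∈ L.take i}) =
      Ideal.map (e : A →+* A) (Ideal.span {y | y ∈ L.take i}) :=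
    (Ideal.map_span _ _).symm
  rw [htake, hget, hspan] at hx
  rw [htake, hspan]
  have hx2 := Ideal.mem_map_of_mem (e.symm : A →+* A) hx
  rw [Ideal.map_map] at hx2
  have hcomp : (e.symm : A →+* A).comp (e : A →+* A) = RingHom.id A :=
    RingHom.ext fun a => e.symm_apply_apply a
  rw [hcomp, Ideal.map_id] at hx2
  simp only [RingEquiv.coe_toRingHom, map_mul, RingEquiv.symm_apply_apply] at hx2
  have hmem := h i hi' (e.symm x) hx2
  have hxx : x = e (e.symm x) := (e.apply_symm_apply x).symm
  rw [hxx]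
  exact Ideal.mem_map_of_mem _ hmem

lemma isRegular_X {σ R : Type*} [CommRing R] [Nontrivial R]
    (L : List (MvPolynomial σ R))
    (hX : ∀ y ∈ L, ∃ v, y = X v) (hnd : L.Nodup) : IsRegularSeq L := by
  classical
  intro i hi x hx
  obtain ⟨v, hv⟩ := hX (L.get ⟨i, hi⟩) (L.get_mem _)
  set s : Set σ := {w | X w ∈ L.take i} with hs
  have hset : {y | y ∈ L.take i} = X '' s := by
    ext y
    constructor
    · intro hy
      obtain ⟨w, rfl⟩ := hX y (List.mem_of_mem_take hy)
      exact ⟨w, hy, rfl⟩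
    · rintro ⟨w, hw, rfl⟩
      exact hw
  have hvs : v ∉ s := by
    intro hvmem
    have hnd2 : (L.take i ++ L.drop i).Nodup := by
      rw [List.take_append_drop]; exact hnd
    rw [List.nodup_append] at hnd2
    have hdrop : L.get ⟨i, hi⟩ ∈ L.drop i := by
      rw [List.get_eq_getElem, List.drop_eq_getElem_cons hi]
      exact List.mem_cons_self
    exact hnd2.2.2 _ (by rw [hv]; exact hvmem) _ hdrop rfl
  rw [hv, hset] at hx
  rw [hset]
  rw [mem_ideal_span_X_image] at hx ⊢
  intro d hd
  have hcoeff : coeff d x ≠ 0 := mem_support_iff.mp hd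
  have hd2 : (Finsupp.single v 1 + d) ∈ (X v * x).support := by
    rw [mem_support_iff, coeff_X_mul]
    exact hcoeff
  obtain ⟨w, hws, hw⟩ := hx _ hd2
  refine ⟨w, hws, ?_⟩
  have hwv : ¬ v = w := fun h => hvs (h ▸ hws)
  rwa [Finsupp.add_apply, Finsupp.single_apply, if_neg hwv, zero_add] at hw

end St14

/-- (a) for odd `k`, `ν_k` is a `B`-linear combination of the `α_i` with `i` odd, `1 ≤ i ≤ m`;
(b) the ideal generated by the `ν_i` (`1 ≤ i ≤ m` odd) equals the ideal generated by the
`α_i` (`1 ≤ i ≤ m` odd); (c) the `ν_i` (`1 ≤ i ≤ m` odd) form an `S`-regular sequence in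
any order. -/
theorem stmt_14 (m l : ℕ) (hm : 1 ≤ m) (hl : 1 ≤ l) (n : Fin l → ℕ) (hn : ∀ p, 1 ≤ n p) :
    (∀ k : ℕ, Odd k →
      ∃ c : ℕ → MvPolynomial (Fin m ⊕ Σ p : Fin l, Fin (n p / 2)) (ZMod 2),
        (∀ i, c i ∈ Bsub m l n) ∧
        nuS m l n k = ∑ i ∈ (Finset.Icc 1 m).filter (fun i => Odd i), c i * alS m l n i) ∧
    Ideal.span {x | ∃ i, Odd i ∧ 1 ≤ i ∧ i ≤ m ∧ x = nuS m l n i} =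
      Ideal.span {x | ∃ i, Odd i ∧ 1 ≤ i ∧ i ≤ m ∧ x = alS m l n i} ∧
    (∀ l' : List (MvPolynomial (Fin m ⊕ Σ p : Fin l, Fin (n p / 2)) (ZMod 2)),
      l'.Perm (((List.range (m + 1)).filter (fun i => i % 2 == 1)).map (nuS m l n)) →
        IsRegularSeq l') := by
  refine ⟨fun k hk => St14.parta m l n hm hk, St14.partb m l n hm, ?_⟩
  intro l' hperm
  classical
  set e := St14.eqv m l n with he
  set vlist := ((List.range (m + 1)).filter (fun i => i % 2 == 1)).map (alS m l n) with hv
  have hmem_idx : ∀ i ∈ (List.range (m + 1)).filter (fun i => i % 2 == 1),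
      i % 2 = 1 ∧ 1 ≤ i ∧ i ≤ m := by
    intro i hi
    simp only [List.mem_filter, List.mem_range, beq_iff_eq] at hi
    omega
  have hnu_eq : (((List.range (m + 1)).filter (fun i => i % 2 == 1)).map
      (nuS m l n)).map ⇑e.symm = vlist := by
    rw [List.map_map, hv]
    apply List.map_congr_left
    intro i hi
    obtain ⟨h1, h2, h3⟩ := hmem_idx i hi
    show e.symm (nuS m l n i) = alS m l n i
    rw [St14.eqv_symm_apply]
    have hps := St14.psiF_nuS m l n (j := i - 1) (by omega) (by omega)
    rw [show i - 1 + 1 = i by omega] at hps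
    exact hps
  have hperm2 : (l'.map ⇑e.symm).Perm vlist := by
    rw [← hnu_eq]
    exact hperm.map _
  have hXv : ∀ y ∈ vlist, ∃ v, y = X v := by
    rintro y hy
    rw [hv, List.mem_map] at hy
    obtain ⟨i, hi, rfl⟩ := hy
    obtain ⟨h1, h2, h3⟩ := hmem_idx i hi
    exact ⟨_, St14.alS_eq_X m l n h2 h3⟩
  have hnodup : vlist.Nodup := by
    rw [hv]
    refine List.Nodup.map_on ?_ (List.Nodup.filter _ List.nodup_range)
    intro i hi j hj hij
    obtain ⟨hi1, hi2, hi3⟩ := hmem_idx i hi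
    obtain ⟨hj1, hj2, hj3⟩ := hmem_idx j hj
    rw [St14.alS_eq_X m l n hi2 hi3, St14.alS_eq_X m l n hj2 hj3] at hij
    have hinj := MvPolynomial.X_injective hij
    simp only [Sum.inl.injEq, Fin.mk.injEq] at hinj
    omega
  have hreg : IsRegularSeq (l'.map ⇑e.symm) :=
    St14.isRegular_X _ (fun y hy => hXv y (hperm2.mem_iff.mp hy))
      (hperm2.nodup_iff.mpr hnodup)
  have hl' : l' = (l'.map ⇑e.symm).map ⇑e.toRingEquiv := by
    rw [List.map_map]
    have hid : (⇑e.toRingEquiv ∘ ⇑e.symm) = id := by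
      funext y; exact e.apply_symm_apply y
    rw [hid, List.map_id]
  rw [hl']
  exact St14.isRegular_map e.toRingEquiv hreg
end

section
/- Let m, n₁,…,n_l be positive integers, n := m + n₁ + ⋯ + n_l, and let S be the polynomial ring over 𝔽₂ = ℤ/2 in the indeterminates α₁,…,α_m and β_i^{(p)} for 1 ≤ p ≤ l, 1 ≤ i ≤ ⌊n_p/2⌋. With the conventions α₀ := 1, α_i := α_{2m−i} for m < i ≤ 2m, α_i := 0 for i < 0 or i > 2m, β_0^{(p)} := 1, β_i^{(p)} := β_{n_p−i}^{(p)} for ⌊n_p/2⌋ < i ≤ n_p, β_i^{(p)} := 0 for i < 0 or i > n_p, define μ_j := Σ_{a₁+⋯+a_l = j} β_{a₁}^{(1)}⋯β_{a_l}^{(l)} and ν_k := Σ_{i=0}^{⌊k/2⌋} α_{k−2i}·μ_i + (binom(2n, k) mod 2). Set h' := ⌊m/2⌋ + ⌊n₁/2⌋ + ⋯ + ⌊n_l/2⌋ and let B ⊆ S be the subring generated by all the β_i^{(p)}. Then for every k ≥ 1: if k is odd, ν_k is a B-linear combination of the ν_j with j odd and 1 ≤ j ≤ m (in particular ν_k lies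 in the ideal generated by these); if k is even, ν_k is an 𝔽₂-linear combination of the ν_j with j even and 2 ≤ j ≤ 2h' (in particular ν_k lies in the ideal generated by these). -/
open MvPolynomial

section Aux
variable (m l : ℕ) (n : Fin l → ℕ)

lemma alS_symm {i : ℕ} (h : i ≤ 2 * m) : alS m l n i = alS m l n (2 * m - i) := by
  have e : min (2 * m - i) (2 * m - (2 * m - i)) = min i (2 * m - i) := by omega
  rw [alS, alS, dif_pos h, dif_pos (by omega : 2 * m - i ≤ 2 * m)]
  simp only [e]

lemma alS_zero {i : ℕ} (h : 2 * m < i) : alS m l n i = 0 := by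
  rw [alS, dif_neg (by omega)]

lemma alS_zero' : alS m l n 0 = 1 := by
  rw [alS, dif_pos (by omega), dif_neg (by omega)]

lemma beS_symm {p : Fin l} {i : ℕ} (h : i ≤ n p) : beS m l n p i = beS m l n p (n p - i) := by
  have e : min (n p - i) (n p - (n p - i)) = min i (n p - i) := by omega
  rw [beS, beS, dif_pos h, dif_pos (by omega : n p - i ≤ n p)]
  simp only [e]

lemma beS_zero {p : Fin l} {i : ℕ} (h : n p < i) : beS m l n p i = 0 := by
  rw [beS, dif_neg (by omega)]

lemma beS_zero' (p : Fin l) : beS m l n p 0 = 1 := by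
  rw [beS, dif_pos (by omega), dif_neg (by omega)]

lemma beS_mem (p : Fin l) (i : ℕ) : beS m l n p i ∈ Bsub m l n := by
  rw [beS]
  split_ifs
  · exact Subring.subset_closure ⟨_, rfl⟩
  · exact Subring.one_mem _
  · exact Subring.zero_mem _

lemma muS_mem (j : ℕ) : muS m l n j ∈ Bsub m l n := by
  refine Subring.sum_mem _ fun a _ => Subring.prod_mem _ fun p _ => beS_mem m l n p _

lemma muS_zero' : muS m l n 0 = 1 := by
  rw [muS]
  have h : (Fintype.piFinset fun _ : Fin l => Finset.range (0 + 1)).filter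
      (fun a => ∑ p, a p = 0) = {fun _ => 0} := by
    ext a
    simp only [Finset.mem_filter, Fintype.mem_piFinset, Finset.mem_range, Finset.mem_singleton]
    constructor
    · rintro ⟨h1, -⟩; funext p; have := h1 p; omega
    · rintro rfl; simp
  rw [h, Finset.sum_singleton]
  simp [beS_zero']

lemma charS : CharP (MvPolynomial (Fin m ⊕ Σ p : Fin l, Fin (n p / 2)) (ZMod 2)) 2 :=
  inferInstance

-- choose lemmas
lemma choose_odd_zmod (N k : ℕ) (hk : Odd k) : (((2 * N).choose k : ℕ) : ZMod 2) = 0 := by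
  have h1 : ((1 + Polynomial.X : Polynomial (ZMod 2)) ^ (2 * N)) =
      Polynomial.expand (ZMod 2) 2 ((1 + Polynomial.X) ^ N) := by
    have h2 : (1 + Polynomial.X : Polynomial (ZMod 2)) ^ 2 = 1 + Polynomial.X ^ 2 := by
      have := CharTwo.add_sq (1 : Polynomial (ZMod 2)) Polynomial.X
      simpa using this
    rw [map_pow, map_add, map_one, Polynomial.expand_X, pow_mul, h2]
  have := congrArg (fun f : Polynomial (ZMod 2) => f.coeff k) h1
  simp only [Polynomial.coeff_one_add_X_pow, Polynomial.coeff_expand (by norm_num : 0 < 2)] at this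
  rw [if_neg (by rw [Nat.odd_iff] at hk; omega)] at this
  exact this

lemma choose_even_zmod (N k : ℕ) : (((2 * N).choose (2 * k) : ℕ) : ZMod 2) = ((N.choose k : ℕ) : ZMod 2) := by
  have h1 : ((1 + Polynomial.X : Polynomial (ZMod 2)) ^ (2 * N)) =
      Polynomial.expand (ZMod 2) 2 ((1 + Polynomial.X) ^ N) := by
    have h2 : (1 + Polynomial.X : Polynomial (ZMod 2)) ^ 2 = 1 + Polynomial.X ^ 2 := by
      have := CharTwo.add_sq (1 : Polynomial (ZMod 2)) Polynomial.X
      simpa using this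
    rw [map_pow, map_add, map_one, Polynomial.expand_X, pow_mul, h2]
  have := congrArg (fun f : Polynomial (ZMod 2) => f.coeff (2 * k)) h1
  simp only [Polynomial.coeff_one_add_X_pow, Polynomial.coeff_expand (by norm_num : 0 < 2)] at this
  rw [if_pos ⟨k, rfl⟩, Nat.mul_div_cancel_left _ (by norm_num)] at this
  exact this

end Aux

section ODD
variable (m l : ℕ) (n : Fin l → ℕ)

local notation "S" => MvPolynomial (Fin m ⊕ Σ p : Fin l, Fin (n p / 2)) (ZMod 2)


def F1 : Finset ℕ := (Finset.Icc 1 m).filter (fun j => Odd j)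

def GoodOdd (x : S) : Prop :=
  ∃ c : ℕ → S, (∀ i, c i ∈ Bsub m l n) ∧ x = ∑ j ∈ F1 m, c j * nuS m l n j

lemma goodOdd_zero : GoodOdd m l n 0 :=
  ⟨0, fun _ => Subring.zero_mem _, by simp⟩

lemma goodOdd_add {x y : S} (hx : GoodOdd m l n x) (hy : GoodOdd m l n y) :
    GoodOdd m l n (x + y) := by
  obtain ⟨c, hc, rfl⟩ := hx
  obtain ⟨d, hd, rfl⟩ := hy
  exact ⟨c + d, fun i => Subring.add_mem _ (hc i) (hd i), by
    rw [← Finset.sum_add_distrib]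
    exact Finset.sum_congr rfl fun j _ => by simp [add_mul]⟩

lemma goodOdd_mulB {b x : S} (hb : b ∈ Bsub m l n) (hx : GoodOdd m l n x) :
    GoodOdd m l n (b * x) := by
  obtain ⟨c, hc, rfl⟩ := hx
  exact ⟨fun i => b * c i, fun i => Subring.mul_mem _ hb (hc i), by
    rw [Finset.mul_sum]
    exact Finset.sum_congr rfl fun j _ => (mul_assoc _ _ _).symm⟩

lemma goodOdd_gen {j : ℕ} (hj : j ∈ F1 m) : GoodOdd m l n (nuS m l n j) := by
  refine ⟨fun i => if i = j then 1 else 0, fun i => by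
    simp only []
    split_ifs
    exacts [Subring.one_mem _, Subring.zero_mem _], ?_⟩
  have : ∀ j1 ∈ F1 m, (if j1 = j then (1:S) else 0) * nuS m l n j1 =
      if j1 = j then nuS m l n j1 else 0 := by
    intro j1 _; split_ifs with h <;> simp [h]
  rw [Finset.sum_congr rfl this, Finset.sum_ite_eq' (F1 m) j (fun j => nuS m l n j), if_pos hj]

lemma goodOdd_sum {ι : Type*} (s : Finset ι) (f : ι → S)
    (h : ∀ i ∈ s, GoodOdd m l n (f i)) : GoodOdd m l n (∑ i ∈ s, f i) := by
  classical
  induction s using Finset.induction with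
  | empty => simpa using goodOdd_zero m l n
  | insert _ _ hne ih =>
    rw [Finset.sum_insert hne]
    exact goodOdd_add m l n (h _ (Finset.mem_insert_self _ _))
      (ih fun i hi => h i (Finset.mem_insert_of_mem hi))


lemma cast_choose_S (a : ℕ) :
    ((a : ℕ) : MvPolynomial (Fin m ⊕ Σ p : Fin l, Fin (n p / 2)) (ZMod 2)) =
      MvPolynomial.C ((a : ℕ) : ZMod 2) :=
  (map_natCast (MvPolynomial.C : ZMod 2 →+* _) _).symm

lemma nuS_odd {k : ℕ} (hk : Odd k) :
    nuS m l n k = ∑ i ∈ Finset.range (k / 2 + 1), alS m l n (k - 2 * i) * muS m l n i := by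
  rw [nuS, cast_choose_S, choose_odd_zmod _ _ hk, map_zero, add_zero]

lemma alS_goodOdd : ∀ j : ℕ, Odd j → j ≤ m → GoodOdd m l n (alS m l n j) := by
  intro j
  induction j using Nat.strong_induction_on with
  | _ j IH =>
    intro hj hjm
    have hν := nuS_odd m l n hj
    rw [Finset.sum_range_succ'] at hν
    simp only [Nat.mul_zero, Nat.sub_zero, muS_zero', mul_one] at hν
    have key : alS m l n j = nuS m l n j +
        ∑ i ∈ Finset.range (j / 2), alS m l n (j - 2 * (i + 1)) * muS m l n (i + 1) := by
      rw [hν, add_comm _ (alS m l n j), add_assoc, CharTwo.add_self_eq_zero, add_zero]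
    rw [key]
    refine goodOdd_add m l n (goodOdd_gen m l n ?_) (goodOdd_sum m l n _ _ fun i hi => ?_)
    · rw [F1, Finset.mem_filter, Finset.mem_Icc]
      have h1 : 1 ≤ j := by rcases hj with ⟨t, ht⟩; omega
      exact ⟨⟨h1, hjm⟩, hj⟩
    · rw [Finset.mem_range] at hi
      have h1 : Odd (j - 2 * (i + 1)) := by
        rcases hj with ⟨t, ht⟩
        refine ⟨t - (i + 1), by omega⟩
      rw [mul_comm]
      refine goodOdd_mulB m l n (muS_mem m l n _) (IH _ (by omega) h1 (by omega))

lemma nuS_goodOdd {k : ℕ} (hk : Odd k) : GoodOdd m l n (nuS m l n k) := by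
  rw [nuS_odd m l n hk]
  refine goodOdd_sum m l n _ _ fun i hi => ?_
  rw [Finset.mem_range] at hi
  set j := k - 2 * i with hjdef
  have hj : Odd j := by rcases hk with ⟨t, ht⟩; exact ⟨t - i, by omega⟩
  by_cases h2m : j ≤ 2 * m
  · have hstep : GoodOdd m l n (alS m l n j) := by
      by_cases hm : j ≤ m
      · exact alS_goodOdd m l n j hj hm
      · rw [alS_symm m l n h2m]
        have hodd' : Odd (2 * m - j) := by
          rcases hj with ⟨t, ht⟩
          exact ⟨m - t - 1, by omega⟩
        exact alS_goodOdd m l n _ hodd' (by omega)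
    rw [mul_comm]
    exact goodOdd_mulB m l n (muS_mem m l n _) hstep
  · rw [alS_zero m l n (by omega), zero_mul]
    exact goodOdd_zero m l n

end ODD


section EVEN
open Polynomial
variable (m l : ℕ) (n : Fin l → ℕ)

local notation "S" => MvPolynomial (Fin m ⊕ Σ p : Fin l, Fin (n p / 2)) (ZMod 2)

noncomputable def AbP : Polynomial S :=
  ∑ j ∈ Finset.range (m + 1), Polynomial.C (alS m l n (2 * j)) * Polynomial.X ^ j

noncomputable def Bpoly (p : Fin l) : Polynomial S :=
  ∑ i ∈ Finset.range (n p + 1), Polynomial.C (beS m l n p i) * Polynomial.X ^ i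

noncomputable def Mp : Polynomial S := ∏ p, Bpoly m l n p

noncomputable def Qp : Polynomial S :=
  AbP m l n * Mp m l n + (1 + Polynomial.X) ^ (m + ∑ p, n p)

lemma AbP_coeff (j : ℕ) : (AbP m l n).coeff j = alS m l n (2 * j) := by
  rw [AbP, Polynomial.finset_sum_coeff]
  have h : ∀ i ∈ Finset.range (m + 1),
      (Polynomial.C (alS m l n (2 * i)) * Polynomial.X ^ i).coeff j =
      if j = i then alS m l n (2 * i) else 0 := by
    intro i _
    rw [Polynomial.coeff_C_mul, Polynomial.coeff_X_pow, mul_ite, mul_one, mul_zero]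
  rw [Finset.sum_congr rfl h, Finset.sum_ite_eq]
  split_ifs with hj
  · rfl
  · rw [Finset.mem_range] at hj
    rw [alS_zero m l n (by omega)]

lemma Bpoly_coeff (p : Fin l) (j : ℕ) : (Bpoly m l n p).coeff j = beS m l n p j := by
  rw [Bpoly, Polynomial.finset_sum_coeff]
  have h : ∀ i ∈ Finset.range (n p + 1),
      (Polynomial.C (beS m l n p i) * Polynomial.X ^ i).coeff j =
      if j = i then beS m l n p i else 0 := by
    intro i _
    rw [Polynomial.coeff_C_mul, Polynomial.coeff_X_pow, mul_ite, mul_one, mul_zero]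
  rw [Finset.sum_congr rfl h, Finset.sum_ite_eq]
  split_ifs with hj
  · rfl
  · rw [Finset.mem_range] at hj
    rw [beS_zero m l n (by omega)]

lemma AbP_deg : (AbP m l n).natDegree ≤ m :=
  Polynomial.natDegree_le_iff_coeff_eq_zero.mpr fun N hN => by
    rw [AbP_coeff, alS_zero m l n (by omega)]

lemma Bpoly_deg (p : Fin l) : (Bpoly m l n p).natDegree ≤ n p :=
  Polynomial.natDegree_le_iff_coeff_eq_zero.mpr fun N hN => by
    rw [Bpoly_coeff, beS_zero m l n (by omega)]

lemma Mp_deg : (Mp m l n).natDegree ≤ ∑ p, n p :=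
  le_trans (Polynomial.natDegree_prod_le _ _)
    (Finset.sum_le_sum fun p _ => Bpoly_deg m l n p)

lemma Mp_coeff (j : ℕ) : (Mp m l n).coeff j = muS m l n j := by
  classical
  have hcoe : ((Mp m l n : Polynomial S) : PowerSeries S) =
      ∏ p, ((Bpoly m l n p : Polynomial S) : PowerSeries S) := by
    rw [Mp]
    simp only [← Polynomial.coeToPowerSeries.ringHom_apply]
    exact map_prod _ _ _
  have h1 : (Mp m l n).coeff j =
      PowerSeries.coeff j ((Mp m l n : Polynomial S) : PowerSeries S) :=
    (Polynomial.coeff_coe _ _).symm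
  rw [h1, hcoe, PowerSeries.coeff_prod, muS]
  refine Finset.sum_nbij' (fun d => (d : Fin l → ℕ)) (fun a => Finsupp.equivFunOnFinite.symm a)
    ?_ ?_ ?_ ?_ ?_
  · intro d hd
    rw [Finset.mem_finsuppAntidiag] at hd
    have h2 : ∑ q, d q = j := hd.1
    rw [Finset.mem_filter, Fintype.mem_piFinset]
    refine ⟨fun p => ?_, h2⟩
    rw [Finset.mem_range]
    show d p < j + 1
    have : d p ≤ ∑ q, d q := Finset.single_le_sum (fun q _ => Nat.zero_le _) (Finset.mem_univ p)
    omega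
  · intro a ha
    rw [Finset.mem_filter] at ha
    rw [Finset.mem_finsuppAntidiag]
    constructor
    · simpa using ha.2
    · exact fun x _ => Finset.mem_univ x
  · intro d _
    exact Finsupp.equivFunOnFinite.symm_apply_apply d
  · intro a _
    exact Finsupp.equivFunOnFinite.apply_symm_apply a
  · intro d _
    refine Finset.prod_congr rfl fun p _ => ?_
    rw [Polynomial.coeff_coe, Bpoly_coeff]

end EVEN

section POLYHELP
open Polynomial
variable {R : Type*} [CommRing R]

lemma reflect_eq_self_of (f : Polynomial R) (N : ℕ) (hdeg : f.natDegree ≤ N)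
    (hsym : ∀ j ≤ N, f.coeff j = f.coeff (N - j)) : Polynomial.reflect N f = f := by
  ext k
  rw [Polynomial.coeff_reflect]
  rcases le_or_gt k N with h | h
  · rw [Polynomial.revAt_le h]
    exact (hsym k h).symm
  · rw [Polynomial.revAt_eq_self_of_lt h]

lemma reflect_prod {ι : Type*} (s : Finset ι) (f : ι → Polynomial R) (d : ι → ℕ)
    (h : ∀ i ∈ s, (f i).natDegree ≤ d i) :
    Polynomial.reflect (∑ i ∈ s, d i) (∏ i ∈ s, f i) = ∏ i ∈ s, Polynomial.reflect (d i) (f i) := by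
  classical
  induction s using Finset.induction with
  | empty => simp [Polynomial.reflect_one]
  | @insert a s hne ih =>
    rw [Finset.prod_insert hne, Finset.sum_insert hne,
      Polynomial.reflect_mul (f a) (∏ i ∈ s, f i) (h a (Finset.mem_insert_self _ _))
        (le_trans (Polynomial.natDegree_prod_le _ _)
          (Finset.sum_le_sum fun i hi => h i (Finset.mem_insert_of_mem hi))),
      ih (fun i hi => h i (Finset.mem_insert_of_mem hi)), Finset.prod_insert hne]

lemma one_add_X_dvd_of_palindromic [CharP R 2] (f : Polynomial R) (N : ℕ) (hN : Odd N)
    (hdeg : f.natDegree ≤ N) (hsym : ∀ j ≤ N, f.coeff j = f.coeff (N - j)) :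
    (1 + Polynomial.X : Polynomial R) ∣ f := by
  have heval : f.eval 1 = 0 := by
    rw [Polynomial.eval_eq_sum_range' (lt_of_le_of_lt hdeg (Nat.lt_succ_self N))]
    simp only [one_pow, mul_one]
    refine Finset.sum_involution (fun i _ => N - i) ?_ ?_ ?_ ?_
    · intro i hi
      rw [Finset.mem_range] at hi
      rw [hsym i (by omega)]
      exact CharTwo.add_self_eq_zero _
    · intro i hi hne
      rw [Finset.mem_range] at hi
      show N - i ≠ i
      rcases hN with ⟨t, ht⟩
      omega
    · intro i hi
      rw [Finset.mem_range] at hi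
      show N - i ∈ Finset.range (N + 1)
      rw [Finset.mem_range]
      omega
    · intro i hi
      rw [Finset.mem_range] at hi
      show N - (N - i) = i
      omega
  have hroot : (Polynomial.X - Polynomial.C (1 : R)) ∣ f :=
    Polynomial.dvd_iff_isRoot.mpr heval
  have e : (Polynomial.X - Polynomial.C (1 : R)) = 1 + Polynomial.X := by
    rw [Polynomial.C_1, CharTwo.sub_eq_add, add_comm]
  rwa [e] at hroot

lemma one_add_X_pow_reflect [Nontrivial R] (r : ℕ) :
    Polynomial.reflect r ((1 + Polynomial.X : Polynomial R) ^ r) = (1 + Polynomial.X) ^ r := by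
  refine reflect_eq_self_of _ _ ?_ ?_
  · exact le_trans (Polynomial.natDegree_pow_le)
      (by rw [add_comm, ← Polynomial.C_1, Polynomial.natDegree_X_add_C]; omega)
  · intro j hj
    rw [Polynomial.coeff_one_add_X_pow, Polynomial.coeff_one_add_X_pow,
      ← Nat.choose_symm hj]

lemma monic_one_add_X [Nontrivial R] : (1 + Polynomial.X : Polynomial R).Monic := by
  rw [add_comm, ← Polynomial.C_1]
  exact Polynomial.monic_X_add_C 1

lemma natDegree_one_add_X [Nontrivial R] : (1 + Polynomial.X : Polynomial R).natDegree = 1 := by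
  rw [add_comm, ← Polynomial.C_1, Polynomial.natDegree_X_add_C]

lemma natDegree_one_add_X_pow_le [Nontrivial R] (r : ℕ) :
    ((1 + Polynomial.X : Polynomial R) ^ r).natDegree ≤ r :=
  le_trans (Polynomial.natDegree_pow_le)
    (by rw [add_comm, ← Polynomial.C_1, Polynomial.natDegree_X_add_C]; omega)

end POLYHELP

section EVEN2
open Polynomial
variable (m l : ℕ) (n : Fin l → ℕ)

local notation "S" => MvPolynomial (Fin m ⊕ Σ p : Fin l, Fin (n p / 2)) (ZMod 2)

def F2 : Finset ℕ :=
  (Finset.Icc 2 (2 * (m / 2 + ∑ p, n p / 2))).filter (fun j => Even j)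

def GoodEven (x : S) : Prop :=
  ∃ c : ℕ → ZMod 2, x = ∑ j ∈ F2 m l n, c j • nuS m l n j

lemma goodEven_zero : GoodEven m l n 0 := ⟨0, by simp⟩

lemma goodEven_add {x y : S} (hx : GoodEven m l n x) (hy : GoodEven m l n y) :
    GoodEven m l n (x + y) := by
  obtain ⟨c, rfl⟩ := hx
  obtain ⟨d, rfl⟩ := hy
  exact ⟨c + d, by
    rw [← Finset.sum_add_distrib]
    exact Finset.sum_congr rfl fun j _ => by simp [add_smul]⟩

lemma goodEven_smul (z : ZMod 2) {x : S} (hx : GoodEven m l n x) :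
    GoodEven m l n (z • x) := by
  obtain ⟨c, rfl⟩ := hx
  exact ⟨fun j => z * c j, by
    rw [Finset.smul_sum]
    exact Finset.sum_congr rfl fun j _ => (smul_smul z (c j) _)⟩

lemma goodEven_natCast_mul (a : ℕ) {x : S} (hx : GoodEven m l n x) :
    GoodEven m l n ((a : S) * x) := by
  have e : (a : S) * x = ((a : ZMod 2)) • x := by
    rw [MvPolynomial.smul_eq_C_mul, map_natCast (MvPolynomial.C : ZMod 2 →+* S)]
  rw [e]
  exact goodEven_smul m l n _ hx

lemma goodEven_gen {j : ℕ} (hj : j ∈ F2 m l n) : GoodEven m l n (nuS m l n j) := by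
  refine ⟨fun i => if i = j then 1 else 0, ?_⟩
  have h : ∀ j1 ∈ F2 m l n, (if j1 = j then (1 : ZMod 2) else 0) • nuS m l n j1 =
      if j1 = j then nuS m l n j1 else 0 := by
    intro j1 _
    split_ifs with h <;> simp [h]
  rw [Finset.sum_congr rfl h, Finset.sum_ite_eq' (F2 m l n) j (fun j => nuS m l n j), if_pos hj]

lemma goodEven_sum {ι : Type*} (s : Finset ι) (f : ι → S)
    (h : ∀ i ∈ s, GoodEven m l n (f i)) : GoodEven m l n (∑ i ∈ s, f i) := by
  classical
  induction s using Finset.induction with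
  | empty => simpa using goodEven_zero m l n
  | insert _ _ hne ih =>
    rw [Finset.sum_insert hne]
    exact goodEven_add m l n (h _ (Finset.mem_insert_self _ _))
      (ih fun i hi => h i (Finset.mem_insert_of_mem hi))

lemma nuS_even_eq_coeffQ (t : ℕ) : nuS m l n (2 * t) = (Qp m l n).coeff t := by
  rw [Qp, Polynomial.coeff_add, Polynomial.coeff_mul,
    Finset.Nat.sum_antidiagonal_eq_sum_range_succ_mk, nuS]
  have e1 : 2 * t / 2 = t := by omega
  rw [e1]
  refine congrArg₂ (· + ·) ?_ ?_
  · rw [← Finset.sum_range_reflect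
      (fun i => (AbP m l n).coeff i * (Mp m l n).coeff (t - i)) (t + 1)]
    refine Finset.sum_congr rfl fun i hi => ?_
    rw [Finset.mem_range] at hi
    have e2 : 2 * t - 2 * i = 2 * (t + 1 - 1 - i) := by omega
    have e3 : i = t - (t + 1 - 1 - i) := by omega
    rw [AbP_coeff, Mp_coeff, ← e2, ← e3]
  · rw [Polynomial.coeff_one_add_X_pow]
    calc ((2 * (m + ∑ p, n p)).choose (2 * t) : S)
        = MvPolynomial.C (((2 * (m + ∑ p, n p)).choose (2 * t) : ℕ) : ZMod 2) :=
          cast_choose_S m l n _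
      _ = MvPolynomial.C ((((m + ∑ p, n p).choose t : ℕ)) : ZMod 2) := by
          rw [choose_even_zmod]
      _ = (((m + ∑ p, n p).choose t : ℕ) : S) := (cast_choose_S m l n _).symm

lemma symQ : Polynomial.reflect (m + ∑ p, n p) (Qp m l n) = Qp m l n := by
  rw [Qp, Polynomial.reflect_add,
    Polynomial.reflect_mul (AbP m l n) (Mp m l n) (AbP_deg m l n) (Mp_deg m l n)]
  have h1 : Polynomial.reflect m (AbP m l n) = AbP m l n := by
    refine reflect_eq_self_of _ _ (AbP_deg m l n) fun j hj => ?_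
    rw [AbP_coeff, AbP_coeff]
    have e : 2 * (m - j) = 2 * m - 2 * j := by omega
    rw [alS_symm m l n (by omega : 2 * j ≤ 2 * m), e]
  have h2 : Polynomial.reflect (∑ p, n p) (Mp m l n) = Mp m l n := by
    rw [Mp, reflect_prod Finset.univ _ (fun p => n p) (fun p _ => Bpoly_deg m l n p)]
    refine Finset.prod_congr rfl fun p _ => ?_
    refine reflect_eq_self_of _ _ (Bpoly_deg m l n p) fun j hj => ?_
    rw [Bpoly_coeff, Bpoly_coeff]
    exact beS_symm m l n hj
  have h3 : Polynomial.reflect (m + ∑ p, n p)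
      ((1 + Polynomial.X : Polynomial S) ^ (m + ∑ p, n p)) =
      (1 + Polynomial.X) ^ (m + ∑ p, n p) := one_add_X_pow_reflect _
  rw [h1, h2, h3]

noncomputable def rdef : ℕ := (if Odd m then 1 else 0) + ∑ p, (if Odd (n p) then 1 else 0)

lemma rdef_arith (hm : 1 ≤ m) (hn : ∀ p, 1 ≤ n p) :
    rdef m l n ≤ m + ∑ p, n p ∧
      (m + ∑ p, n p) - rdef m l n = 2 * (m / 2 + ∑ p, n p / 2) := by
  have h1 : (if Odd m then 1 else 0) = m % 2 := by
    split_ifs with h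
    · rw [Nat.odd_iff] at h; omega
    · rw [Nat.odd_iff] at h; omega
  have h2 : ∀ p, (if Odd (n p) then 1 else 0) = n p % 2 := by
    intro p
    split_ifs with h
    · rw [Nat.odd_iff] at h; omega
    · rw [Nat.odd_iff] at h; omega
  have h3 : rdef m l n = m % 2 + ∑ p, n p % 2 := by
    rw [rdef, h1]
    congr 1
    exact Finset.sum_congr rfl fun p _ => h2 p
  have h4 : ∑ p, n p = ∑ p, (2 * (n p / 2) + n p % 2) := by
    refine Finset.sum_congr rfl fun p _ => by omega
  rw [h3, h4, Finset.sum_add_distrib, ← Finset.mul_sum]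
  omega

lemma dvd_Qp (hm : 1 ≤ m) (hn : ∀ p, 1 ≤ n p) : (1 + Polynomial.X : Polynomial S) ^ rdef m l n ∣ Qp m l n := by
  have hAb : (1 + Polynomial.X : Polynomial S) ^ (if Odd m then 1 else 0) ∣ AbP m l n := by
    split_ifs with h
    · rw [pow_one]
      refine one_add_X_dvd_of_palindromic _ m h (AbP_deg m l n) fun j hj => ?_
      rw [AbP_coeff, AbP_coeff]
      have e : 2 * (m - j) = 2 * m - 2 * j := by omega
      rw [alS_symm m l n (by omega : 2 * j ≤ 2 * m), e]
    · rw [pow_zero]; exact one_dvd _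
  have hBp : ∀ p, (1 + Polynomial.X : Polynomial S) ^ (if Odd (n p) then 1 else 0) ∣
      Bpoly m l n p := by
    intro p
    split_ifs with h
    · rw [pow_one]
      refine one_add_X_dvd_of_palindromic _ (n p) h (Bpoly_deg m l n p) fun j hj => ?_
      rw [Bpoly_coeff, Bpoly_coeff]
      exact beS_symm m l n hj
    · rw [pow_zero]; exact one_dvd _
  have hM : (1 + Polynomial.X : Polynomial S) ^ (∑ p, if Odd (n p) then 1 else 0) ∣
      Mp m l n := by
    rw [← Finset.prod_pow_eq_pow_sum, Mp]
    exact Finset.prod_dvd_prod_of_dvd _ _ fun p _ => hBp p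
  have hAM : (1 + Polynomial.X : Polynomial S) ^ rdef m l n ∣ AbP m l n * Mp m l n := by
    rw [rdef, pow_add]
    exact mul_dvd_mul hAb hM
  have hpow : (1 + Polynomial.X : Polynomial S) ^ rdef m l n ∣
      (1 + Polynomial.X) ^ (m + ∑ p, n p) := by
    refine pow_dvd_pow _ ?_
    rw [rdef]
    refine add_le_add (by split_ifs <;> omega) (Finset.sum_le_sum fun p _ => ?_)
    have := hn p
    split_ifs <;> omega
  rw [Qp]
  exact dvd_add hAM hpow

lemma nuS_zero : nuS m l n 0 = 0 := by
  have e : (0 : ℕ) / 2 + 1 = 1 := rfl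
  rw [nuS, e, Finset.sum_range_one]
  simp only [Nat.mul_zero, Nat.sub_zero, alS_zero', muS_zero', mul_one, one_mul,
    Nat.choose_zero_right, Nat.cast_one]
  exact CharTwo.add_self_eq_zero 1

lemma nuS_goodEven (hm : 1 ≤ m) (hn : ∀ p, 1 ≤ n p) (t : ℕ) :
    GoodEven m l n (nuS m l n (2 * t)) := by
  classical
  obtain ⟨R, hR⟩ := dvd_Qp m l n hm hn
  obtain ⟨hrle, hrsub⟩ := rdef_arith m l n hm hn
  have h1Xne : (1 + Polynomial.X : Polynomial S) ≠ 0 := (monic_one_add_X).ne_zero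
  have hpowne : ((1 + Polynomial.X : Polynomial S) ^ rdef m l n) ≠ 0 := pow_ne_zero _ h1Xne
  have hQdeg : (Qp m l n).natDegree ≤ m + ∑ p, n p := by
    rw [Qp]
    refine le_trans (Polynomial.natDegree_add_le _ _)
      (max_le ?_ (natDegree_one_add_X_pow_le _))
    exact le_trans (Polynomial.natDegree_mul_le) (add_le_add (AbP_deg m l n) (Mp_deg m l n))
  have hpowdeg : ((1 + Polynomial.X : Polynomial S) ^ rdef m l n).natDegree = rdef m l n := by
    rw [Polynomial.natDegree_pow, natDegree_one_add_X, mul_one]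
  have hRdeg : R.natDegree ≤ 2 * (m / 2 + ∑ p, n p / 2) := by
    by_cases hR0 : R = 0
    · rw [hR0, Polynomial.natDegree_zero]; omega
    · have hd : (Qp m l n).natDegree = rdef m l n + R.natDegree := by
        rw [hR, Polynomial.natDegree_mul hpowne hR0, hpowdeg]
      omega
  have hRrefl : Polynomial.reflect (2 * (m / 2 + ∑ p, n p / 2)) R = R := by
    have h5 : Qp m l n = (1 + Polynomial.X) ^ rdef m l n *
        Polynomial.reflect (2 * (m / 2 + ∑ p, n p / 2)) R := by
      conv_lhs => rw [← symQ m l n]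
      have e : m + ∑ p, n p = rdef m l n + 2 * (m / 2 + ∑ p, n p / 2) := by omega
      rw [hR, e, Polynomial.reflect_mul _ _ (natDegree_one_add_X_pow_le _) hRdeg,
        one_add_X_pow_reflect]
    rw [hR] at h5
    exact (mul_left_cancel₀ hpowne h5).symm
  have hRsym : ∀ j ≤ 2 * (m / 2 + ∑ p, n p / 2),
      R.coeff j = R.coeff (2 * (m / 2 + ∑ p, n p / 2) - j) := by
    intro j hj
    conv_lhs => rw [← hRrefl]
    rw [Polynomial.coeff_reflect, Polynomial.revAt_le hj]
  have hR0c : R.coeff 0 = 0 := by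
    have h0 : (Qp m l n).coeff 0 = 0 := by
      have := nuS_even_eq_coeffQ m l n 0
      rw [Nat.mul_zero, nuS_zero] at this
      exact this.symm
    rw [hR, Polynomial.mul_coeff_zero] at h0
    have hc : ((1 + Polynomial.X : Polynomial S) ^ rdef m l n).coeff 0 = 1 := by
      rw [Polynomial.coeff_one_add_X_pow, Nat.choose_zero_right, Nat.cast_one]
    rwa [hc, one_mul] at h0
  have hQc : ∀ s : ℕ, (Qp m l n).coeff s =
      ∑ i ∈ Finset.range (s + 1), (((rdef m l n).choose i : ℕ) : S) * R.coeff (s - i) := by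
    intro s
    rw [hR, Polynomial.coeff_mul, Finset.Nat.sum_antidiagonal_eq_sum_range_succ_mk]
    exact Finset.sum_congr rfl fun i _ => by rw [Polynomial.coeff_one_add_X_pow]
  have key1 : ∀ j, j ≤ m / 2 + ∑ p, n p / 2 → GoodEven m l n (R.coeff j) := by
    intro j
    induction j using Nat.strong_induction_on with
    | _ j IH =>
      intro hj
      rcases Nat.eq_zero_or_pos j with rfl | hj1
      · rw [hR0c]; exact goodEven_zero m l n
      · have hq := hQc j
        rw [Finset.sum_range_succ'] at hq
        simp only [Nat.choose_zero_right, Nat.cast_one, one_mul, Nat.sub_zero] at hq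
        have key : R.coeff j = nuS m l n (2 * j) +
            ∑ i ∈ Finset.range j,
              (((rdef m l n).choose (i + 1) : ℕ) : S) * R.coeff (j - (i + 1)) := by
          rw [nuS_even_eq_coeffQ m l n j, hq, add_comm _ (R.coeff j), add_assoc,
            CharTwo.add_self_eq_zero, add_zero]
        rw [key]
        refine goodEven_add m l n (goodEven_gen m l n ?_)
          (goodEven_sum m l n _ _ fun i hi => ?_)
        · rw [F2, Finset.mem_filter, Finset.mem_Icc]
          exact ⟨⟨by omega, by omega⟩, even_two_mul j⟩
        · rw [Finset.mem_range] at hi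
          exact goodEven_natCast_mul m l n _ (IH _ (by omega) (by omega))
  have key2 : ∀ j, GoodEven m l n (R.coeff j) := by
    intro j
    rcases le_or_gt j (m / 2 + ∑ p, n p / 2) with h | h
    · exact key1 j h
    · rcases le_or_gt j (2 * (m / 2 + ∑ p, n p / 2)) with h2 | h2
      · rw [hRsym j h2]
        exact key1 _ (by omega)
      · rw [Polynomial.coeff_eq_zero_of_natDegree_lt (by omega)]
        exact goodEven_zero m l n
  rw [nuS_even_eq_coeffQ m l n t, hQc t]
  exact goodEven_sum m l n _ _ fun i _ => goodEven_natCast_mul m l n _ (key2 _)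

end EVEN2
/-- For `k ≥ 1`: if `k` is odd, `ν_k` is a `B`-linear combination of the `ν_j` with `j` odd,
`1 ≤ j ≤ m` (in particular it lies in the ideal they generate); if `k` is even, `ν_k` is an
`𝔽₂`-linear combination of the `ν_j` with `j` even, `2 ≤ j ≤ 2h'` (in particular it lies in
the ideal they generate), where `h' = ⌊m/2⌋ + ⌊n₁/2⌋ + ⋯ + ⌊n_l/2⌋`. -/
theorem stmt_16 (m l : ℕ) (hm : 1 ≤ m) (hl : 1 ≤ l) (n : Fin l → ℕ) (hn : ∀ p, 1 ≤ n p)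
    (k : ℕ) (hk : 1 ≤ k) :
    (Odd k →
      (∃ c : ℕ → MvPolynomial (Fin m ⊕ Σ p : Fin l, Fin (n p / 2)) (ZMod 2),
        (∀ i, c i ∈ Bsub m l n) ∧
        nuS m l n k = ∑ j ∈ (Finset.Icc 1 m).filter (fun j => Odd j), c j * nuS m l n j) ∧
      nuS m l n k ∈ Ideal.span {x | ∃ j, Odd j ∧ 1 ≤ j ∧ j ≤ m ∧ x = nuS m l n j}) ∧
    (Even k →
      (∃ c : ℕ → ZMod 2,
        nuS m l n k =
          ∑ j ∈ (Finset.Icc 2 (2 * (m / 2 + ∑ p, n p / 2))).filter (fun j => Even j),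
            c j • nuS m l n j) ∧
      nuS m l n k ∈
        Ideal.span
          {x | ∃ j, Even j ∧ 2 ≤ j ∧ j ≤ 2 * (m / 2 + ∑ p, n p / 2) ∧ x = nuS m l n j}) := by
  constructor
  · intro hodd
    obtain ⟨c, hc, hsum⟩ := nuS_goodOdd m l n hodd
    simp only [F1] at hsum
    refine ⟨⟨c, hc, hsum⟩, ?_⟩
    rw [hsum]
    refine Ideal.sum_mem _ fun j hj => ?_
    rw [Finset.mem_filter, Finset.mem_Icc] at hj
    exact Ideal.mul_mem_left _ _ (Ideal.subset_span ⟨j, hj.2, hj.1.1, hj.1.2, rfl⟩)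
  · intro heven
    obtain ⟨t, ht⟩ := heven
    have h2t : k = 2 * t := by omega
    obtain ⟨c, hsum⟩ := nuS_goodEven m l n hm hn t
    rw [← h2t] at hsum
    simp only [F2] at hsum
    refine ⟨⟨c, hsum⟩, ?_⟩
    rw [hsum]
    refine Ideal.sum_mem _ fun j hj => ?_
    rw [Finset.mem_filter, Finset.mem_Icc] at hj
    rw [MvPolynomial.smul_eq_C_mul]
    exact Ideal.mul_mem_left _ _ (Ideal.subset_span ⟨j, hj.2, hj.1.1, hj.1.2, rfl⟩)
end
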